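/- (Eigenvector correspondence between the two spectral problems) Let ζ ∈ ℂ with ζ ≠ 0. (1) If w ∈ ℂ^{2N}, w ≠ 0, and A(β)w = ζw, then there exists q ∈ ℂ^N with q ≠ 0, C(ζ,β)q = 0, and w = (−iζ·√α·q, √η·q) (block form). (2) Conversely, if q ∈ ℂ^N, q ≠ 0, and C(ζ,β)q = 0, then the vector w = (−iζ·√α·q, √η·q) is nonzero and satisfies A(β)w = ζw. -/

import Mathlib

open Matrix
open scoped ComplexOrder

noncomputable section

variable {N : ℕ}

/-- A real matrix viewed as a complex matrix. -/
def cm (M : Matrix (Fin N) (Fin N) ℝ) : Matrix (Fin N) (Fin N) ℂ :=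
  M.map Complex.ofReal

/-- The quadratic matrix pencil `C(ζ,β) = ζ²α + iζ(2θ + βR) − η`. -/
def pencil (α η θ R : Matrix (Fin N) (Fin N) ℝ) (β : ℝ) (ζ : ℂ) :
    Matrix (Fin N) (Fin N) ℂ :=
  ζ ^ 2 • cm α + (Complex.I * ζ) • ((2 : ℂ) • cm θ + (β : ℂ) • cm R) - cm η

/-- The positive semidefinite square root, as `Matrix.PosSemidef.sqrt` was defined in Mathlib
(Dec 2024); that declaration no longer exists. -/
def psdSqrt {n : Type*} [Fintype n] [DecidableEq n] {A : Matrix n n ℂ} (hA : A.PosSemidef) :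
    Matrix n n ℂ :=
  hA.1.eigenvectorUnitary.1 * diagonal ((↑) ∘ (√·) ∘ hA.1.eigenvalues) *
    (star hA.1.eigenvectorUnitary : Matrix n n ℂ)

/-- `K_p = (√α)⁻¹`. -/
def Kp {α : Matrix (Fin N) (Fin N) ℝ} (hα : (cm α).PosDef) : Matrix (Fin N) (Fin N) ℂ :=
  (psdSqrt hα.posSemidef)⁻¹

/-- `Φ = √η · K_p`. -/
def Phi {α η : Matrix (Fin N) (Fin N) ℝ} (hα : (cm α).PosDef) (hη : (cm η).PosSemidef) :
    Matrix (Fin N) (Fin N) ℂ :=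
  psdSqrt hη * Kp hα

/-- `R̃ = K_p R K_p`. -/
def Rt (R : Matrix (Fin N) (Fin N) ℝ) {α : Matrix (Fin N) (Fin N) ℝ} (hα : (cm α).PosDef) :
    Matrix (Fin N) (Fin N) ℂ :=
  Kp hα * cm R * Kp hα

/-- `Ω_p = −2i K_p θ K_p`. -/
def Omp (θ : Matrix (Fin N) (Fin N) ℝ) {α : Matrix (Fin N) (Fin N) ℝ} (hα : (cm α).PosDef) :
    Matrix (Fin N) (Fin N) ℂ :=
  ((-2 : ℂ) * Complex.I) • (Kp hα * cm θ * Kp hα)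

/-- `Ω = [[Ω_p, −iΦᵀ],[iΦ, 0]]`. -/
def Om (θ : Matrix (Fin N) (Fin N) ℝ) {α η : Matrix (Fin N) (Fin N) ℝ}
    (hα : (cm α).PosDef) (hη : (cm η).PosSemidef) :
    Matrix (Fin N ⊕ Fin N) (Fin N ⊕ Fin N) ℂ :=
  fromBlocks (Omp θ hα) ((-Complex.I) • (Phi hα hη)ᵀ) (Complex.I • Phi hα hη) 0

/-- `B = [[R̃, 0],[0, 0]]`. -/
def Bm (R : Matrix (Fin N) (Fin N) ℝ) {α : Matrix (Fin N) (Fin N) ℝ} (hα : (cm α).PosDef) :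
    Matrix (Fin N ⊕ Fin N) (Fin N ⊕ Fin N) ℂ :=
  fromBlocks (Rt R hα) 0 0 0

/-- The system operator `A(β) = Ω − iβB`. -/
def Asys (θ R : Matrix (Fin N) (Fin N) ℝ) {α η : Matrix (Fin N) (Fin N) ℝ}
    (hα : (cm α).PosDef) (hη : (cm η).PosSemidef) (β : ℝ) :
    Matrix (Fin N ⊕ Fin N) (Fin N ⊕ Fin N) ℂ :=
  Om θ hα hη - (Complex.I * (β : ℂ)) • Bm R hα

/-- The ℓ²→ℓ² operator norm of a complex matrix. -/
def opN {n : Type*} [Fintype n] [DecidableEq n] (M : Matrix n n ℂ) : ℝ :=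
  ‖Matrix.toEuclideanCLM (𝕜 := ℂ) M‖

/-- `ω_max = ‖Ω‖`. -/
def omegaMax (θ : Matrix (Fin N) (Fin N) ℝ) {α η : Matrix (Fin N) (Fin N) ℝ}
    (hα : (cm α).PosDef) (hη : (cm η).PosSemidef) : ℝ :=
  opN (Om θ hα hη)

/-- `b_min`, the smallest nonzero eigenvalue of `B`. -/
def bMin (R : Matrix (Fin N) (Fin N) ℝ) {α : Matrix (Fin N) (Fin N) ℝ} (hα : (cm α).PosDef) : ℝ :=
  sInf {r : ℝ | r ≠ 0 ∧ (r : ℂ) ∈ spectrum ℂ (Bm R hα)}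

-- auxiliary lemmas
open scoped MatrixOrder in
lemma psdSqrt_eq_cfc {n : Type*} [Fintype n] [DecidableEq n] {A : Matrix n n ℂ}
    (hA : A.PosSemidef) : psdSqrt hA = CFC.sqrt A := by
  rw [CFC.sqrt_eq_real_sqrt A hA.nonneg, cfcₙ_eq_cfc, hA.1.cfc_eq, IsHermitian.cfc,
    Unitary.conjStarAlgAut_apply]
  rfl

open scoped MatrixOrder in
lemma Matrix.PosSemidef.sqrt_mul_self {n : Type*} [Fintype n] [DecidableEq n]
    {A : Matrix n n ℂ} (hA : A.PosSemidef) : psdSqrt hA * psdSqrt hA = A := by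
  rw [psdSqrt_eq_cfc]
  exact CFC.sqrt_mul_sqrt_self A hA.nonneg

open scoped MatrixOrder in
lemma Matrix.PosSemidef.posSemidef_sqrt {n : Type*} [Fintype n] [DecidableEq n]
    {A : Matrix n n ℂ} (hA : A.PosSemidef) : (psdSqrt hA).PosSemidef := by
  rw [psdSqrt_eq_cfc]
  exact (CFC.sqrt_nonneg A).posSemidef

open scoped MatrixOrder in
lemma Matrix.PosSemidef.eq_sqrt_of_sq_eq {n : Type*} [Fintype n] [DecidableEq n]
    {A B : Matrix n n ℂ} (hB : B.PosSemidef) (hA : A.PosSemidef) (h : B ^ 2 = A) :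
    B = psdSqrt hA := by
  rw [psdSqrt_eq_cfc]
  exact (CFC.sqrt_unique (by rw [← h, pow_two]) hB.nonneg).symm

lemma cm_star (M : Matrix (Fin N) (Fin N) ℝ) : (cm M).map star = cm M := by
  ext i j; simp [cm]

lemma herm_transpose {A : Matrix (Fin N) (Fin N) ℂ} (h : A.IsHermitian)
    (h2 : A.map star = A) : Aᵀ = A := by
  have hc : Aᴴ.map star = Aᵀ := by ext i j; simp [conjTranspose_apply]
  rw [← hc, h.eq, h2]

lemma sqrt_transpose {A : Matrix (Fin N) (Fin N) ℂ} (hA : A.PosSemidef)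
    (hst : A.map star = A) : (psdSqrt hA)ᵀ = psdSqrt hA := by
  have hAt : Aᵀ = A := herm_transpose hA.1 hst
  have h1 : ((psdSqrt hA)ᵀ).PosSemidef := hA.posSemidef_sqrt.transpose
  have h2 : (psdSqrt hA)ᵀ ^ 2 = A := by
    rw [pow_two, ← transpose_mul, hA.sqrt_mul_self, hAt]
  exact h1.eq_sqrt_of_sq_eq hA h2

section facts
variable {α η θ R : Matrix (Fin N) (Fin N) ℝ}
variable (hα : (cm α).PosDef) (hη : (cm η).PosSemidef)

lemma sqrt_isUnit : IsUnit (psdSqrt hα.posSemidef).det := by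
  have h := hα.posSemidef.sqrt_mul_self
  have : (psdSqrt hα.posSemidef).det * (psdSqrt hα.posSemidef).det = (cm α).det := by
    rw [← det_mul, h]
  have hu : IsUnit ((cm α).det) := isUnit_iff_isUnit_det _ |>.1 hα.isUnit
  rw [← this] at hu
  exact isUnit_of_mul_isUnit_left hu

lemma KS : Kp hα * psdSqrt hα.posSemidef = 1 := nonsing_inv_mul _ (sqrt_isUnit hα)

lemma SK : psdSqrt hα.posSemidef * Kp hα = 1 := mul_nonsing_inv _ (sqrt_isUnit hα)

lemma Kalpha : Kp hα * cm α = psdSqrt hα.posSemidef := by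
  conv_lhs => rw [← hα.posSemidef.sqrt_mul_self, ← Matrix.mul_assoc, KS hα, Matrix.one_mul]

lemma Phi_transpose : (Phi hα hη)ᵀ = Kp hα * psdSqrt hη := by
  rw [Phi, transpose_mul, sqrt_transpose hη (cm_star η)]
  congr 1
  rw [Kp, transpose_nonsing_inv, sqrt_transpose hα.posSemidef (cm_star α)]

lemma Asys_blocks (θ R : Matrix (Fin N) (Fin N) ℝ) (β : ℝ) :
    Asys θ R hα hη β = fromBlocks
      (Omp θ hα - (Complex.I * (β : ℂ)) • Rt R hα)
      ((-Complex.I) • (Kp hα * psdSqrt hη))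
      (Complex.I • Phi hα hη) 0 := by
  rw [Asys, Om, Bm, ← Phi_transpose hα hη]
  ext (i | i) (j | j) <;>
    simp [fromBlocks_apply₁₁, fromBlocks_apply₁₂, fromBlocks_apply₂₁, fromBlocks_apply₂₂]

lemma key_identity (θ R : Matrix (Fin N) (Fin N) ℝ) (β : ℝ) (ζ : ℂ) (q : Fin N → ℂ) :
    Asys θ R hα hη β *ᵥ
        Sum.elim ((-Complex.I * ζ) • (psdSqrt hα.posSemidef *ᵥ q)) (psdSqrt hη *ᵥ q)
      = ζ • Sum.elim ((-Complex.I * ζ) • (psdSqrt hα.posSemidef *ᵥ q)) (psdSqrt hη *ᵥ q)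
        + Sum.elim (Complex.I • (Kp hα *ᵥ (pencil α η θ R β ζ *ᵥ q))) 0 := by
  set S := psdSqrt hα.posSemidef with hSdef
  set K := Kp hα with hKdef
  set E := psdSqrt hη with hEdef
  have h1 : (Omp θ hα - (Complex.I * (β : ℂ)) • Rt R hα) *ᵥ ((-Complex.I * ζ) • (S *ᵥ q))
      + ((-Complex.I) • (K * E)) *ᵥ (E *ᵥ q)
      = ζ • ((-Complex.I * ζ) • (S *ᵥ q))
        + Complex.I • (K *ᵥ (pencil α η θ R β ζ *ᵥ q)) := by
    have hθ' : K * cm θ * K * S = K * cm θ := by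
      rw [Matrix.mul_assoc (K * cm θ), KS hα, Matrix.mul_one]
    have hR' : K * cm R * K * S = K * cm R := by
      rw [Matrix.mul_assoc (K * cm R), KS hα, Matrix.mul_one]
    have hE' : K * E * E = K * cm η := by
      rw [Matrix.mul_assoc, hη.sqrt_mul_self]
    have hKα : K * cm α = S := Kalpha hα
    simp only [pencil, Omp, Rt, sub_mulVec, add_mulVec, smul_mulVec,
      mulVec_smul, mulVec_add, mulVec_sub, mulVec_mulVec, Matrix.smul_mul, Matrix.sub_mul,
      hθ', hR', hE', Kalpha hα, ← hKdef, ← hSdef, smul_smul, hKα]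
    match_scalars <;> ring_nf <;> (try (simp only [Complex.I_sq]; ring_nf))
  have h2 : (Complex.I • Phi hα hη) *ᵥ ((-Complex.I * ζ) • (S *ᵥ q))
      + (0 : Matrix (Fin N) (Fin N) ℂ) *ᵥ (E *ᵥ q) = ζ • (E *ᵥ q) := by
    have hEKS : E * K * S = E := by rw [Matrix.mul_assoc, KS hα, Matrix.mul_one]
    simp only [Phi, ← hKdef, ← hEdef, smul_mulVec, mulVec_smul, mulVec_mulVec,
      Matrix.smul_mul, hEKS, Matrix.zero_mul, zero_mulVec, add_zero, smul_smul]
    match_scalars <;> ring_nf <;> (try (simp only [Complex.I_sq]; ring_nf))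
  rw [Asys_blocks hα hη, fromBlocks_mulVec]
  funext x
  cases x with
  | inl i => simpa using congrFun h1 i
  | inr i => simpa using congrFun h2 i

end facts

section facts2
variable {α η : Matrix (Fin N) (Fin N) ℝ}
variable (hα : (cm α).PosDef) (hη : (cm η).PosSemidef)

lemma K_cancel (v : Fin N → ℂ) (h : Kp hα *ᵥ v = 0) : v = 0 := by
  have := congrArg (fun x => psdSqrt hα.posSemidef *ᵥ x) h
  simpa [mulVec_mulVec, SK hα] using this

lemma S_cancel (v : Fin N → ℂ) (h : psdSqrt hα.posSemidef *ᵥ v = 0) : v = 0 := by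
  have := congrArg (fun x => Kp hα *ᵥ x) h
  simpa [mulVec_mulVec, KS hα] using this

end facts2

/-- **Eigenvector correspondence between the two spectral problems.** For `ζ ≠ 0`:
(1) any eigenvector `w` of `A(β)` with eigenvalue `ζ` has the form
`w = (−iζ√α q, √η q)` with `C(ζ,β)q = 0`, `q ≠ 0`; (2) conversely any nonzero `q` with
`C(ζ,β)q = 0` produces such a nonzero eigenvector. -/
theorem eigenvector_correspondence
    {N : ℕ} (hN : 1 ≤ N)
    (α η θ R : Matrix (Fin N) (Fin N) ℝ)
    (hα : (cm α).PosDef) (hη : (cm η).PosSemidef)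
    (hθ : θᵀ = -θ) (hR : (cm R).PosSemidef)
    (β : ℝ) (hβ : 0 ≤ β)
    (ζ : ℂ) (hζ : ζ ≠ 0) :
    (∀ w : (Fin N ⊕ Fin N) → ℂ, w ≠ 0 → Asys θ R hα hη β *ᵥ w = ζ • w →
      ∃ q : Fin N → ℂ, q ≠ 0 ∧ pencil α η θ R β ζ *ᵥ q = 0 ∧
        w = Sum.elim ((-Complex.I * ζ) • (psdSqrt hα.posSemidef *ᵥ q)) (psdSqrt hη *ᵥ q)) ∧
    (∀ q : Fin N → ℂ, q ≠ 0 → pencil α η θ R β ζ *ᵥ q = 0 →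
      Sum.elim ((-Complex.I * ζ) • (psdSqrt hα.posSemidef *ᵥ q)) (psdSqrt hη *ᵥ q) ≠ 0 ∧
        Asys θ R hα hη β *ᵥ
            Sum.elim ((-Complex.I * ζ) • (psdSqrt hα.posSemidef *ᵥ q)) (psdSqrt hη *ᵥ q) =
          ζ • Sum.elim ((-Complex.I * ζ) • (psdSqrt hα.posSemidef *ᵥ q)) (psdSqrt hη *ᵥ q)) := by
  set S := psdSqrt hα.posSemidef with hSdef
  constructor
  · intro w hw0 hw
    set φ : Fin N → ℂ := fun i => w (Sum.inl i) with hφdef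
    set ψ : Fin N → ℂ := fun i => w (Sum.inr i) with hψdef
    have hwsum : w = Sum.elim φ ψ := by funext x; cases x <;> rfl
    set q : Fin N → ℂ := (Complex.I * ζ⁻¹) • (Kp hα *ᵥ φ) with hqdef
    have hSq : S *ᵥ q = (Complex.I * ζ⁻¹) • φ := by
      rw [hqdef, mulVec_smul, mulVec_mulVec, SK hα, one_mulVec]
    have hφq : (-Complex.I * ζ) • (S *ᵥ q) = φ := by
      rw [hSq, smul_smul]
      rw [show -Complex.I * ζ * (Complex.I * ζ⁻¹) = -(Complex.I*Complex.I) * (ζ * ζ⁻¹) by ring]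
      rw [Complex.I_mul_I, mul_inv_cancel₀ hζ]
      simp
    -- second row of eigen equation
    have hwrows := hw
    rw [hwsum, Asys_blocks hα hη, fromBlocks_mulVec] at hwrows
    have hrow2 : Complex.I • (Phi hα hη *ᵥ φ) = ζ • ψ := by
      funext i
      have := congrFun hwrows (Sum.inr i)
      simpa [smul_mulVec] using this
    have hψq : psdSqrt hη *ᵥ q = ψ := by
      have : psdSqrt hη *ᵥ q = (Complex.I * ζ⁻¹) • (Phi hα hη *ᵥ φ) := by
        rw [hqdef, mulVec_smul, mulVec_mulVec, Phi]
      rw [this]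
      have h2 : Phi hα hη *ᵥ φ = (-Complex.I) • (ζ • ψ) := by
        rw [← hrow2, smul_smul, neg_mul, Complex.I_mul_I, neg_neg, one_smul]
      rw [h2, smul_smul, smul_smul]
      rw [show Complex.I * ζ⁻¹ * -Complex.I * ζ = -(Complex.I*Complex.I) * (ζ⁻¹ * ζ) by ring]
      rw [Complex.I_mul_I, inv_mul_cancel₀ hζ]
      simp
    have hq0 : q ≠ 0 := by
      intro h
      apply hw0
      rw [hwsum, ← hφq, ← hψq, h]
      funext x; cases x <;> simp
    refine ⟨q, hq0, ?_, by rw [hwsum, hφq, hψq]⟩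
    -- pencil equation from key identity
    have hkey := key_identity hα hη θ R β ζ q
    rw [hφq, hψq, ← hwsum, hw] at hkey
    have hz : Sum.elim (Complex.I • (Kp hα *ᵥ (pencil α η θ R β ζ *ᵥ q))) (0 : Fin N → ℂ)
        = 0 := by
      rwa [left_eq_add] at hkey
    have hz1 : Complex.I • (Kp hα *ᵥ (pencil α η θ R β ζ *ᵥ q)) = 0 := by
      funext i; exact congrFun hz (Sum.inl i)
    have hz2 : Kp hα *ᵥ (pencil α η θ R β ζ *ᵥ q) = 0 := by
      have := smul_eq_zero.mp hz1
      rcases this with h | h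
      · exact absurd h Complex.I_ne_zero
      · exact h
    exact K_cancel hα _ hz2
  · intro q hq0 hq
    constructor
    · intro h
      apply hq0
      have h1 : (-Complex.I * ζ) • (S *ᵥ q) = 0 := by
        funext i; exact congrFun h (Sum.inl i)
      have h2 : S *ᵥ q = 0 := by
        rcases smul_eq_zero.mp h1 with h | h
        · exact absurd h (by simp [hζ, Complex.I_ne_zero])
        · exact h
      exact S_cancel hα _ h2
    · have hkey := key_identity hα hη θ R β ζ q
      rw [hq] at hkey
      simpa using hkey
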